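/- arXiv:0810.4112 — 6 statements merged into one kernel-verified Lean document; each statement's English description precedes it below -/
import Mathlib

section
/- Let k be a field, let f ∈ k((x))[[y]] with y-constant term f_0 ∈ x·k[[x]] \ x²·k[[x]], let g ∈ k((x))[[y]] have y-adic order exactly 1, and let φ: k((u))((v)) → k((x))((y)) be the termwise-substitution k-algebra homomorphism with φ(u) = f, φ(v) = g. Let h ∈ k((u))((v)) have v-adic order at least −1, say h = Σ_{j≥−1} h_j(u) v^j. Then the coefficient of y^{−1} (an element of k((x))) of φ(h)·(∂f/∂x · ∂g/∂y − ∂f/∂y · ∂g/∂x) equals h_{−1}(f_0)·(df_0/dx), where h_{−1}(f_0) denotes the substitution of f_0 into the Laurent series h_{−1} ∈ k((u)) (well defined since f_0 has x-adic order exactly 1). That is, for a formal 2-form h du∧dv with at most a simple pole (v-order ≥ −1), the one-codimensional residue transforms as the pullback of the 1-form h_{−1}(u) du under u = f_0(x). -/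
/-!
STATEMENT 3: For a formal 2-form `h du∧dv` with at most a simple pole along `v = 0`
(`v`-adic order of `h` at least `−1`), the one-codimensional residue transforms as
the pullback of the 1-form `h₋₁(u) du` under `u = f₀(x)`:  the `y⁻¹`-coefficient of
`φ(h)·(∂f/∂x·∂g/∂y − ∂f/∂y·∂g/∂x)` equals `h₋₁(f₀)·(df₀/dx)`, where `φ` is the
termwise-substitution homomorphism with `φ(u) = f`, `φ(v) = g`, and `h₋₁(f₀)` is the
(coefficientwise convergent) substitution of `f₀ = f(x,0)` into the Laurent series
`h₋₁ ∈ k((u))`.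
-/

/-- Formal derivative of a Hahn series over `ℤ` (termwise in the variable). -/
noncomputable def hahnDeriv {V : Type*} [AddCommGroup V] (h : HahnSeries ℤ V) :
    HahnSeries ℤ V where
  coeff j := (j + 1) • h.coeff (j + 1)
  isPWO_support' := by
    refine (h.isPWO_support'.image_of_monotone
      (f := fun x : ℤ => x - 1) (fun a b hab => by exact sub_le_sub_right hab 1)).mono ?_
    intro j hj
    rw [Function.mem_support] at hj
    refine ⟨j + 1, ?_, add_sub_cancel_right j 1⟩
    rw [Function.mem_support]
    intro h0
    exact hj (by rw [h0, smul_zero])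

@[simp] lemma hahnDeriv_zero {V : Type*} [AddCommGroup V] :
    hahnDeriv (0 : HahnSeries ℤ V) = 0 := by
  ext j
  simp [hahnDeriv]

/-- The partial derivative `∂/∂y` (in the outer variable) on `k((x))((y))`. -/
noncomputable def derivV {k : Type*} [Field k] :
    LaurentSeries (LaurentSeries k) → LaurentSeries (LaurentSeries k) := hahnDeriv

/-- The partial derivative `∂/∂x` (coefficientwise in the inner variable) on
`k((x))((y))`. -/
noncomputable def derivU {k : Type*} [Field k] (h : LaurentSeries (LaurentSeries k)) :
    LaurentSeries (LaurentSeries k) where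
  coeff j := hahnDeriv (h.coeff j)
  isPWO_support' := by
    refine h.isPWO_support'.mono ?_
    intro j hj
    rw [Function.mem_support] at hj ⊢
    intro h0
    exact hj (by rw [h0, hahnDeriv_zero])

section helpers

lemma coeff_finsetSum {Γ R α : Type*} [PartialOrder Γ] [AddCommMonoid R]
    (S : Finset α) (F : α → HahnSeries Γ R) (d : Γ) :
    (∑ a ∈ S, F a).coeff d = ∑ a ∈ S, (F a).coeff d :=
  map_sum (⟨⟨fun x : HahnSeries Γ R => x.coeff d, rfl⟩,
    fun _ _ => HahnSeries.coeff_add⟩ : HahnSeries Γ R →+ R) F S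

lemma mul_coeff_bound {R : Type*} [NonUnitalNonAssocSemiring R]
    (A B : HahnSeries ℤ R) (a b : ℤ)
    (hA : ∀ a' < a, A.coeff a' = 0) (hB : ∀ b' < b, B.coeff b' = 0)
    {c : ℤ} (hc : c < a + b) : (A * B).coeff c = 0 := by
  rw [HahnSeries.coeff_mul]
  refine Finset.sum_eq_zero fun ij hij => ?_
  simp only [Finset.mem_addAntidiagonal, Function.mem_support] at hij
  obtain ⟨h1, h2, h3⟩ := hij
  exfalso
  have ha : a ≤ ij.1 := le_of_not_gt fun hlt => h1 (hA _ hlt)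
  have hb : b ≤ ij.2 := le_of_not_gt fun hlt => h2 (hB _ hlt)
  omega

lemma mul_coeff_edge {R : Type*} [NonUnitalNonAssocSemiring R]
    (A B : HahnSeries ℤ R) (a b : ℤ)
    (hA : ∀ a' < a, A.coeff a' = 0) (hB : ∀ b' < b, B.coeff b' = 0) :
    (A * B).coeff (a + b) = A.coeff a * B.coeff b := by
  rw [HahnSeries.coeff_mul]
  refine Finset.sum_eq_single (a, b) (fun ij hij hne => ?_) (fun hnm => ?_)
  · simp only [Finset.mem_addAntidiagonal, Function.mem_support] at hij
    obtain ⟨h1, h2, h3⟩ := hij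
    exfalso
    have ha : a ≤ ij.1 := le_of_not_gt fun hlt => h1 (hA _ hlt)
    have hb : b ≤ ij.2 := le_of_not_gt fun hlt => h2 (hB _ hlt)
    have : ij.1 = a ∧ ij.2 = b := by omega
    exact hne (Prod.ext this.1 this.2)
  · by_cases hA0 : A.coeff a = 0
    · rw [hA0, zero_mul]
    by_cases hB0 : B.coeff b = 0
    · rw [hB0, mul_zero]
    exact absurd (Finset.mem_addAntidiagonal.mpr
      ⟨Function.mem_support.mpr hA0, Function.mem_support.mpr hB0, rfl⟩) hnm

lemma order_eq_of_coeff {R : Type*} [Zero R] (A : HahnSeries ℤ R) (a : ℤ)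
    (h0 : A.coeff a ≠ 0) (hlow : ∀ j < a, A.coeff j = 0) : A.order = a := by
  have hne : A ≠ 0 := fun hz => h0 (by simp [hz])
  refine le_antisymm (HahnSeries.order_le_of_coeff_ne_zero h0) ?_
  exact le_of_not_gt fun hlt => (mt HahnSeries.coeff_order_eq_zero.mp hne) (hlow _ hlt)

end helpers

section powers
variable {R : Type*} [Field R]

lemma pow_coeff_lead (A : LaurentSeries R) (a : ℤ) (hlow : ∀ j < a, A.coeff j = 0) (n : ℕ) :
    (∀ j < (n : ℤ) * a, (A ^ n).coeff j = 0) ∧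
      (A ^ n).coeff ((n : ℤ) * a) = (A.coeff a) ^ n := by
  induction n with
  | zero =>
    constructor
    · intro j hj
      simp only [Nat.cast_zero, zero_mul] at hj
      simp [HahnSeries.coeff_one, hj.ne]
    · simp [HahnSeries.coeff_one]
  | succ n ih =>
    have harith : ((n + 1 : ℕ) : ℤ) * a = (n : ℤ) * a + a := by push_cast; ring
    constructor
    · intro j hj
      rw [pow_succ]
      exact mul_coeff_bound _ _ _ _ ih.1 hlow (by omega)
    · rw [pow_succ, harith, mul_coeff_edge _ _ _ _ ih.1 hlow, ih.2, pow_succ]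

lemma inv_coeff_lead (A : LaurentSeries R) (a : ℤ) (h0 : A.coeff a ≠ 0)
    (hlow : ∀ j < a, A.coeff j = 0) :
    (∀ j < -a, (A⁻¹).coeff j = 0) ∧ (A⁻¹).coeff (-a) = (A.coeff a)⁻¹ := by
  have hne : A ≠ 0 := fun hz => h0 (by simp [hz])
  have hinv : A⁻¹ ≠ 0 := inv_ne_zero hne
  have hordA : A.order = a := order_eq_of_coeff A a h0 hlow
  have hord : A⁻¹.order = -a := by
    have h1 : (A * A⁻¹).order = A.order + A⁻¹.order := HahnSeries.order_mul hne hinv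
    rw [mul_inv_cancel₀ hne, HahnSeries.order_one, hordA] at h1
    omega
  have hvan : ∀ j < -a, (A⁻¹).coeff j = 0 := fun j hj =>
    HahnSeries.coeff_eq_zero_of_lt_order (hord ▸ hj)
  refine ⟨hvan, ?_⟩
  have hE := mul_coeff_edge A A⁻¹ a (-a) hlow hvan
  rw [mul_inv_cancel₀ hne] at hE
  simp only [add_neg_cancel, HahnSeries.coeff_one, if_pos rfl] at hE
  exact (inv_eq_of_mul_eq_one_right hE.symm).symm

lemma zpow_coeff_lead (A : LaurentSeries R) (a : ℤ) (h0 : A.coeff a ≠ 0)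
    (hlow : ∀ j < a, A.coeff j = 0) (i : ℤ) :
    (∀ j < i * a, (A ^ i).coeff j = 0) ∧ (A ^ i).coeff (i * a) = (A.coeff a) ^ i := by
  cases i with
  | ofNat n =>
    have := pow_coeff_lead A a hlow n
    simpa [Int.ofNat_eq_natCast, zpow_natCast] using this
  | negSucc n =>
    have hI := inv_coeff_lead A a h0 hlow
    have hP := pow_coeff_lead A⁻¹ (-a) hI.1 (n + 1)
    have harith : Int.negSucc n * a = ((n + 1 : ℕ) : ℤ) * (-a) := by
      rw [Int.negSucc_eq]; push_cast; ring
    constructor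
    · intro j hj
      rw [zpow_negSucc, ← inv_pow]
      exact hP.1 j (by omega)
    · rw [zpow_negSucc, ← inv_pow, harith, hP.2, hI.2, zpow_negSucc, inv_pow]

end powers

lemma smul_mul_laurent {R : Type*} [Semiring R] {Γ : Type*} [AddCommMonoid Γ] [PartialOrder Γ] [IsOrderedCancelAddMonoid Γ]
    (c : R) (x y : HahnSeries Γ R) : (c • x) * y = c • (x * y) := by
  rw [← HahnSeries.single_zero_mul_eq_smul, ← HahnSeries.single_zero_mul_eq_smul, mul_assoc]

theorem stmt_3 (k : Type) [Field k]
    (f g : LaurentSeries (LaurentSeries k))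
    -- f ∈ k((x))[[y]] with y-constant term f₀ ∈ x·k[[x]] \ x²·k[[x]]
    (hf_pow : ∀ j : ℤ, j < 0 → f.coeff j = 0)
    (hf0_low : ∀ i : ℤ, i < 1 → (f.coeff 0).coeff i = 0)
    (hf0_one : (f.coeff 0).coeff 1 ≠ 0)
    -- g of y-adic order exactly 1
    (hg_low : ∀ j : ℤ, j < 1 → g.coeff j = 0)
    (hg_one : g.coeff 1 ≠ 0)
    -- φ is the termwise-substitution k-algebra homomorphism, u ↦ f, v ↦ g
    (φ : LaurentSeries (LaurentSeries k) →ₐ[k] LaurentSeries (LaurentSeries k))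
    (hφu : φ (HahnSeries.single 0 (HahnSeries.single 1 1)) = f)
    (hφv : φ (HahnSeries.single 1 1) = g)
    (hφsubst : ∀ h : LaurentSeries (LaurentSeries k), ∀ d e : ℤ, ∃ N : ℕ, ∀ n : ℕ, N ≤ n →
      (((φ h - ∑ j ∈ Finset.Icc (-(n : ℤ)) (n : ℤ), ∑ i ∈ Finset.Icc (-(n : ℤ)) (n : ℤ),
          ((h.coeff j).coeff i) • (f ^ i * g ^ j)).coeff d).coeff e = 0))
    -- h has v-adic order at least −1
    (h : LaurentSeries (LaurentSeries k))
    (hh : ∀ j : ℤ, j < -1 → h.coeff j = 0)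
    -- s = h₋₁(f₀), the substitution of f₀ into h₋₁ ∈ k((u))
    (s : LaurentSeries k)
    (hs : ∀ d : ℤ,
      s.coeff d = (∑ i ∈ Finset.Icc (min (h.coeff (-1)).order 0) d,
        ((h.coeff (-1)).coeff i) • (f.coeff 0) ^ i).coeff d) :
    (φ h * (derivU f * derivV g - derivV f * derivU g)).coeff (-1) =
      s * hahnDeriv (f.coeff 0) := by
  classical
  set f0 : LaurentSeries k := f.coeff 0 with hf0def
  set g1 : LaurentSeries k := g.coeff 1 with hg1def
  have hf0ne : f.coeff 0 ≠ 0 := fun hz => hf0_one (by rw [hf0def, hz]; simp)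
  -- zpow facts for f (order 0 in y)
  have hfz : ∀ i : ℤ, (∀ j < (0:ℤ), (f ^ i).coeff j = 0) ∧ (f ^ i).coeff 0 = f0 ^ i := by
    intro i
    have := zpow_coeff_lead f 0 hf0ne hf_pow i
    simpa using this
  -- zpow facts for g (order 1 in y)
  have hgz : ∀ i : ℤ, (∀ j < i, (g ^ i).coeff j = 0) ∧ (g ^ i).coeff i = g1 ^ i := by
    intro i
    have := zpow_coeff_lead g 1 hg_one hg_low i
    simpa using this
  -- zpow facts for f0 (order 1 in x)
  have hf0z : ∀ i : ℤ, (∀ j < i, (f0 ^ i).coeff j = 0) ∧ (f0 ^ i).coeff i = (f0.coeff 1) ^ i := by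
    intro i
    have := zpow_coeff_lead f0 1 hf0_one hf0_low i
    simpa using this
  -- g1 inverse bound
  set t : ℤ := g1.order with htdef
  have hg1z : ∀ j < -t, (g1 ^ (-1 : ℤ)).coeff j = 0 := by
    intro j hj
    have := zpow_coeff_lead g1 t ((mt HahnSeries.coeff_order_eq_zero.mp hg_one))
      (fun j hj => HahnSeries.coeff_eq_zero_of_lt_order hj) (-1)
    exact this.1 j (by omega)
  -- the partial sums
  set P : ℕ → LaurentSeries (LaurentSeries k) := fun n =>
    ∑ j ∈ Finset.Icc (-(n : ℤ)) (n : ℤ), ∑ i ∈ Finset.Icc (-(n : ℤ)) (n : ℤ),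
      ((h.coeff j).coeff i) • (f ^ i * g ^ j) with hPdef
  have hPn : ∀ n : ℕ, (∑ j ∈ Finset.Icc (-(n : ℤ)) (n : ℤ), ∑ i ∈ Finset.Icc (-(n : ℤ)) (n : ℤ),
      ((h.coeff j).coeff i) • (f ^ i * g ^ j)) = P n := fun n => rfl
  set A : ℕ → LaurentSeries k := fun n =>
    ∑ i ∈ Finset.Icc (-(n : ℤ)) (n : ℤ), ((h.coeff (-1)).coeff i) • (f0 ^ i) with hAdef
  have hAn : ∀ n : ℕ, (∑ i ∈ Finset.Icc (-(n : ℤ)) (n : ℤ),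
      ((h.coeff (-1)).coeff i) • (f0 ^ i)) = A n := fun n => rfl
  -- coefficient of P n at -1
  have hPcoeff : ∀ n : ℕ, 1 ≤ n → (P n).coeff (-1) = A n * g1 ^ (-1 : ℤ) := by
    intro n hn
    rw [← hPn n, coeff_finsetSum]
    rw [Finset.sum_eq_single (-1 : ℤ) (fun j hjmem hjne => ?_) (fun hnm => ?_)]
    · -- value at j = -1
      rw [coeff_finsetSum]
      have hterm : ∀ i ∈ Finset.Icc (-(n:ℤ)) (n:ℤ),
          (((h.coeff (-1)).coeff i) • (f ^ i * g ^ (-1:ℤ))).coeff (-1)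
            = (((h.coeff (-1)).coeff i) • (f0 ^ i)) * g1 ^ (-1 : ℤ) := by
        intro i _
        rw [HahnSeries.coeff_smul]
        have hE := mul_coeff_edge (f ^ i) (g ^ (-1:ℤ)) 0 (-1) (hfz i).1 (hgz (-1)).1
        rw [zero_add] at hE
        rw [hE, (hfz i).2, (hgz (-1)).2, smul_mul_laurent]
      rw [Finset.sum_congr rfl hterm]
      rw [← Finset.sum_mul, hAn n]
    · -- j ≠ -1 gives zero
      rw [coeff_finsetSum]
      refine Finset.sum_eq_zero fun i _ => ?_
      rcases lt_or_gt_of_ne hjne with hlt | hgt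
      · rw [hh j (by omega)]
        simp
      · rw [HahnSeries.coeff_smul,
          mul_coeff_bound (f ^ i) (g ^ j) 0 j (hfz i).1 (hgz j).1 (by omega), smul_zero]
    · exfalso
      apply hnm
      rw [Finset.mem_Icc]
      omega
  -- coefficients of P n below -1 vanish
  have hPlow : ∀ n : ℕ, ∀ d : ℤ, d < -1 → (P n).coeff d = 0 := by
    intro n d hd
    rw [← hPn n, coeff_finsetSum]
    refine Finset.sum_eq_zero fun j _ => ?_
    rw [coeff_finsetSum]
    refine Finset.sum_eq_zero fun i _ => ?_
    rcases lt_or_ge j (-1 : ℤ) with hlt | hge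
    · rw [hh j hlt]; simp
    · rw [HahnSeries.coeff_smul,
        mul_coeff_bound (f ^ i) (g ^ j) 0 j (hfz i).1 (hgz j).1 (by omega), smul_zero]
  -- φ h vanishes below -1
  have hφlow : ∀ d : ℤ, d < -1 → (φ h).coeff d = 0 := by
    intro d hd
    apply HahnSeries.ext
    funext e
    obtain ⟨N, hN⟩ := hφsubst h d e
    have h1 := hN N le_rfl
    rw [HahnSeries.coeff_sub, HahnSeries.coeff_sub, hPn N, hPlow N d hd] at h1
    simpa using h1
  -- stabilization of A n towards s
  set m : ℤ := min (h.coeff (-1)).order 0 with hmdef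
  have hstab : ∀ (M : ℤ) (n : ℕ), -(n:ℤ) ≤ m → M ≤ (n:ℤ) → ∀ d ≤ M,
      (A n).coeff d = s.coeff d := by
    intro M n hn1 hn2 d hd
    rw [hs d, ← hAn n, coeff_finsetSum, coeff_finsetSum]
    refine (Finset.sum_subset ?_ ?_).symm
    · intro i hi
      rw [Finset.mem_Icc] at hi ⊢
      omega
    · intro i hi hni
      rw [Finset.mem_Icc] at hni
      rw [HahnSeries.coeff_smul]
      rcases not_and_or.mp (fun hc => hni ⟨hc.1, hc.2⟩) with hlt | hgt
      · rw [HahnSeries.coeff_eq_zero_of_lt_order (by omega : i < (h.coeff (-1)).order),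
          zero_smul]
      · rw [(hf0z i).1 d (by omega), smul_zero]
  -- the key identity for the -1 coefficient of φ h
  have hφm1 : (φ h).coeff (-1) = s * g1 ^ (-1 : ℤ) := by
    apply HahnSeries.ext
    funext e
    obtain ⟨N, hN⟩ := hφsubst h (-1) e
    set n : ℕ := N + m.natAbs + (e + t).natAbs + 1 with hndef
    have h1 := hN n (by omega)
    rw [HahnSeries.coeff_sub, HahnSeries.coeff_sub, hPn n, sub_eq_zero] at h1
    rw [h1, hPcoeff n (by omega)]
    have key : ((s - A n) * g1 ^ (-1 : ℤ)).coeff e = 0 := by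
      refine mul_coeff_bound _ _ (e + t + 1) (-t) (fun d hd => ?_) hg1z (by omega)
      rw [HahnSeries.coeff_sub,
        hstab (e + t) n (by omega) (by omega) d (by omega), sub_self]
    rw [sub_mul, HahnSeries.coeff_sub, sub_eq_zero] at key
    exact key.symm
  -- Jacobian coefficients
  have hDUf : ∀ a' : ℤ, a' < 0 → (derivU f).coeff a' = 0 := by
    intro a' ha'
    show hahnDeriv (f.coeff a') = 0
    rw [hf_pow a' ha', hahnDeriv_zero]
  have hDVg : ∀ b' : ℤ, b' < 0 → (derivV g).coeff b' = 0 := by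
    intro b' hb'
    show (b' + 1) • g.coeff (b' + 1) = 0
    rw [hg_low (b' + 1) (by omega)]
    simp
  have hDVf : ∀ b' : ℤ, b' < 0 → (derivV f).coeff b' = 0 := by
    intro b' hb'
    show (b' + 1) • f.coeff (b' + 1) = 0
    by_cases hb1 : b' + 1 = 0
    · rw [hb1]
      simp
    · rw [hf_pow (b' + 1) (by omega)]
      simp
  have hDUg : ∀ b' : ℤ, b' < 1 → (derivU g).coeff b' = 0 := by
    intro b' hb'
    show hahnDeriv (g.coeff b') = 0
    rw [hg_low b' hb', hahnDeriv_zero]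
  set J : LaurentSeries (LaurentSeries k) :=
    derivU f * derivV g - derivV f * derivU g with hJdef
  have hJlow : ∀ b : ℤ, b < 0 → J.coeff b = 0 := by
    intro b hb
    rw [hJdef, HahnSeries.coeff_sub, mul_coeff_bound _ _ 0 0 hDUf hDVg (by omega),
      mul_coeff_bound _ _ 0 1 hDVf hDUg (by omega), sub_zero]
  have hJ0 : J.coeff 0 = hahnDeriv f0 * g1 := by
    rw [hJdef, HahnSeries.coeff_sub]
    have hE := mul_coeff_edge (derivU f) (derivV g) 0 0 hDUf hDVg
    norm_num at hE
    rw [hE, mul_coeff_bound _ _ 0 1 hDVf hDUg (by omega), sub_zero]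
    have h2 : (derivV g).coeff 0 = g1 := by
      show (0 + 1 : ℤ) • g.coeff (0 + 1) = g1
      norm_num; rfl
    rw [h2]
    rfl
  have hmain : (φ h * J).coeff (-1) = (φ h).coeff (-1) * J.coeff 0 := by
    have := mul_coeff_edge (φ h) J (-1) 0 hφlow hJlow
    simpa using this
  rw [hmain, hφm1, hJ0]
  have hg1ne : g1 ≠ 0 := hg_one
  rw [zpow_neg_one]
  field_simp
end

section
/- Let k be a field (of arbitrary characteristic) and let A, B ∈ k((u))((v)). Define Jac(A,B) := (∂A/∂u)(∂B/∂v) − (∂A/∂v)(∂B/∂u) ∈ k((u))((v)). Then the coefficient of v^{−1} of Jac(A,B), which is an element of k((u)), is a formal derivative: there exists φ ∈ k((u)) such that this coefficient equals dφ/du. In particular, the coefficient of u^{−1} in the coefficient of v^{−1} of Jac(A,B) is zero, i.e., the two-codimensional residue of the formal 2-form dA∧dB in the coordinates (u,v) vanishes. -/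
lemma hahnDeriv_coeff {V : Type*} [AddCommGroup V] (h : HahnSeries ℤ V) (j : ℤ) :
    (hahnDeriv h).coeff j = (j + 1) • h.coeff (j + 1) := rfl

lemma support_hahnDeriv_subset {V : Type*} [AddCommGroup V] (h : HahnSeries ℤ V) :
    (hahnDeriv h).support ⊆ (fun z : ℤ => z - 1) '' h.support := by
  intro j hj
  rw [HahnSeries.mem_support, hahnDeriv_coeff] at hj
  refine ⟨j + 1, ?_, add_sub_cancel_right j 1⟩
  intro h0
  exact hj (by rw [h0, smul_zero])

lemma hahnDeriv_mul {R : Type*} [Ring R] (x y : HahnSeries ℤ R) :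
    hahnDeriv (x * y) = hahnDeriv x * y + x * hahnDeriv y := by
  have hSx' : ((fun z : ℤ => z - 1) '' x.support).IsPWO :=
    x.isPWO_support'.image_of_monotone (fun a b hab => sub_le_sub_right hab 1)
  have hSy' : ((fun z : ℤ => z - 1) '' y.support).IsPWO :=
    y.isPWO_support'.image_of_monotone (fun a b hab => sub_le_sub_right hab 1)
  ext j
  rw [HahnSeries.coeff_add, hahnDeriv_coeff,
      HahnSeries.coeff_mul_left' hSx' (support_hahnDeriv_subset x),
      HahnSeries.coeff_mul_right' hSy' (support_hahnDeriv_subset y),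
      HahnSeries.coeff_mul]
  have e1 : ∑ ij ∈ Finset.antidiagonal hSx' y.isPWO_support j,
        (hahnDeriv x).coeff ij.1 * y.coeff ij.2
      = ∑ ij ∈ Finset.antidiagonal x.isPWO_support y.isPWO_support (j + 1),
        ij.1 • (x.coeff ij.1 * y.coeff ij.2) := by
    refine Finset.sum_nbij' (fun p : ℤ × ℤ => (p.1 + 1, p.2))
      (fun p : ℤ × ℤ => (p.1 - 1, p.2)) ?_ ?_ ?_ ?_ ?_
    · rintro ⟨a, b⟩ hp
      simp only [Finset.mem_antidiagonal, Set.mem_image] at hp ⊢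
      obtain ⟨⟨c, hc, hc1⟩, hb, hab⟩ := hp
      have hca : c = a + 1 := by omega
      exact ⟨hca ▸ hc, hb, by omega⟩
    · rintro ⟨a, b⟩ hp
      simp only [Finset.mem_antidiagonal, Set.mem_image] at hp ⊢
      obtain ⟨ha, hb, hab⟩ := hp
      exact ⟨⟨a, ha, rfl⟩, hb, by omega⟩
    · rintro ⟨a, b⟩ _; simp
    · rintro ⟨a, b⟩ _; simp
    · rintro ⟨a, b⟩ _
      dsimp only
      rw [hahnDeriv_coeff, smul_mul_assoc]
  have e2 : ∑ ij ∈ Finset.antidiagonal x.isPWO_support hSy' j,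
        x.coeff ij.1 * (hahnDeriv y).coeff ij.2
      = ∑ ij ∈ Finset.antidiagonal x.isPWO_support y.isPWO_support (j + 1),
        ij.2 • (x.coeff ij.1 * y.coeff ij.2) := by
    refine Finset.sum_nbij' (fun p : ℤ × ℤ => (p.1, p.2 + 1))
      (fun p : ℤ × ℤ => (p.1, p.2 - 1)) ?_ ?_ ?_ ?_ ?_
    · rintro ⟨a, b⟩ hp
      simp only [Finset.mem_antidiagonal, Set.mem_image] at hp ⊢
      obtain ⟨ha, ⟨c, hc, hc1⟩, hab⟩ := hp
      have hcb : c = b + 1 := by omega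
      exact ⟨ha, hcb ▸ hc, by omega⟩
    · rintro ⟨a, b⟩ hp
      simp only [Finset.mem_antidiagonal, Set.mem_image] at hp ⊢
      obtain ⟨ha, hb, hab⟩ := hp
      exact ⟨ha, ⟨b, hb, rfl⟩, by omega⟩
    · rintro ⟨a, b⟩ _; simp
    · rintro ⟨a, b⟩ _; simp
    · rintro ⟨a, b⟩ _
      dsimp only
      rw [hahnDeriv_coeff, mul_smul_comm]
  rw [e1, e2, ← Finset.sum_add_distrib, Finset.smul_sum]
  refine Finset.sum_congr rfl ?_
  rintro ⟨a, b⟩ hp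
  rw [Finset.mem_antidiagonal] at hp
  rw [← add_smul, hp.2.2]


lemma hahnDeriv_add {V : Type*} [AddCommGroup V] (f g : HahnSeries ℤ V) :
    hahnDeriv (f + g) = hahnDeriv f + hahnDeriv g := by
  ext j
  simp [hahnDeriv_coeff, smul_add]

lemma hahnDeriv_sum {V : Type*} [AddCommGroup V] {ι : Type*} (s : Finset ι)
    (f : ι → HahnSeries ℤ V) :
    hahnDeriv (∑ i ∈ s, f i) = ∑ i ∈ s, hahnDeriv (f i) := by
  induction s using Finset.cons_induction with
  | empty => ext j; simp [hahnDeriv_coeff]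
  | cons a s ha ih => rw [Finset.sum_cons, Finset.sum_cons, hahnDeriv_add, ih]

/-- `coeff` at a fixed index, as an additive homomorphism. -/
noncomputable def coeffHom {V : Type*} [AddCommGroup V] (j : ℤ) : HahnSeries ℤ V →+ V where
  toFun h := h.coeff j
  map_zero' := rfl
  map_add' _ _ := rfl

lemma zsmul_coeff {V : Type*} [AddCommGroup V] (n : ℤ) (f : HahnSeries ℤ V) (j : ℤ) :
    (n • f).coeff j = n • f.coeff j :=
  map_zsmul (coeffHom j) n f

lemma hahnDeriv_zsmul {V : Type*} [AddCommGroup V] (n : ℤ) (f : HahnSeries ℤ V) :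
    hahnDeriv (n • f) = n • hahnDeriv f := by
  ext j
  rw [hahnDeriv_coeff, zsmul_coeff, zsmul_coeff, hahnDeriv_coeff, smul_comm]

section Main

variable {k : Type*} [Field k]

lemma derivU_coeff (h : LaurentSeries (LaurentSeries k)) (j : ℤ) :
    (derivU h).coeff j = hahnDeriv (h.coeff j) := rfl

lemma derivV_coeff (h : LaurentSeries (LaurentSeries k)) (j : ℤ) :
    (derivV h).coeff j = (j + 1) • h.coeff (j + 1) := rfl

lemma support_derivU_subset (h : LaurentSeries (LaurentSeries k)) :
    (derivU h).support ⊆ h.support := by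
  intro j hj
  rw [HahnSeries.mem_support, derivU_coeff] at hj
  intro h0
  exact hj (by rw [h0, hahnDeriv_zero])

lemma derivU_mul (x y : LaurentSeries (LaurentSeries k)) :
    derivU (x * y) = derivU x * y + x * derivU y := by
  ext j
  rw [HahnSeries.coeff_add, derivU_coeff,
      HahnSeries.coeff_mul_left' x.isPWO_support (support_derivU_subset x),
      HahnSeries.coeff_mul_right' y.isPWO_support (support_derivU_subset y),
      HahnSeries.coeff_mul, hahnDeriv_sum]
  have : ∀ ij : ℤ × ℤ, ij ∈ Finset.antidiagonal x.isPWO_support y.isPWO_support j →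
      hahnDeriv (x.coeff ij.1 * y.coeff ij.2)
        = (derivU x).coeff ij.1 * y.coeff ij.2 + x.coeff ij.1 * (derivU y).coeff ij.2 := by
    intro ij _
    rw [hahnDeriv_mul, derivU_coeff, derivU_coeff]
  rw [Finset.sum_congr rfl this, Finset.sum_add_distrib]

lemma derivV_mul (x y : LaurentSeries (LaurentSeries k)) :
    derivV (x * y) = derivV x * y + x * derivV y :=
  hahnDeriv_mul x y

lemma derivU_derivV_comm (h : LaurentSeries (LaurentSeries k)) :
    derivU (derivV h) = derivV (derivU h) := by
  ext j
  rw [derivU_coeff, derivV_coeff, derivV_coeff, derivU_coeff, hahnDeriv_zsmul]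

lemma derivV_coeff_neg_one (h : LaurentSeries (LaurentSeries k)) :
    (derivV h).coeff (-1) = 0 := by
  rw [derivV_coeff]
  norm_num

end Main

theorem stmt_4 (k : Type) [Field k] (A B : LaurentSeries (LaurentSeries k)) :
    (∃ φ : LaurentSeries k,
      (derivU A * derivV B - derivV A * derivU B).coeff (-1) = hahnDeriv φ) ∧
    ((derivU A * derivV B - derivV A * derivU B).coeff (-1)).coeff (-1) = 0 := by
  have key : derivU A * derivV B - derivV A * derivU B
      = derivU (A * derivV B) - derivV (A * derivU B) := by
    rw [derivU_mul, derivV_mul, derivU_derivV_comm B]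
    abel
  have h1 : (derivU A * derivV B - derivV A * derivU B).coeff (-1)
      = hahnDeriv ((A * derivV B).coeff (-1)) := by
    rw [key, HahnSeries.coeff_sub, derivV_coeff_neg_one, sub_zero, derivU_coeff]
  refine ⟨⟨(A * derivV B).coeff (-1), h1⟩, ?_⟩
  rw [h1, hahnDeriv_coeff]
  norm_num
end

section
/- Let R be a complete discrete valuation ring containing a field k, with maximal ideal m and residue field K = R/m, and let u ∈ R be an element whose residue ū ∈ K is transcendental over k and such that K is a finite separable extension of the subfield k(ū) generated by k and ū. Then there exists a unique subfield L of R containing k and u such that the quotient map R → K restricts to an isomorphism of L onto K. Moreover, this field L is generated over k(u) by a single element y ∈ R. -/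
open Polynomial IsLocalRing


/-!
STATEMENT 5: Existence and uniqueness of the coefficient field `K_u` (the field
`𝒦_u` of the paper).  `R` is a complete discrete valuation ring containing a field
`k`, `u ∈ R` has residue `ū` transcendental over `k`, and the residue field
`K = R/m` is finite and separable over `k(ū)`.  Then there is a unique subfield
`L ⊆ R` containing `k` and `u` mapped isomorphically onto `K` by the quotient map;
moreover `L` is generated over `k(u)` by a single element `y ∈ R` (formalized:
`L` is the smallest subfield of `R` containing `k`, `u` and `y`).
-/

/-- `L` is a subfield of `R` containing (the image of) `k` and `u`, mapped
isomorphically onto the residue field by the quotient map. -/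
def IsCoeffField (k : Type*) (R : Type*) [Field k] [CommRing R] [IsLocalRing R]
    [Algebra k R] (u : R) (L : Subring R) : Prop :=
  IsField L ∧ (∀ c : k, algebraMap k R c ∈ L) ∧ u ∈ L ∧
    Function.Bijective (fun x : L => IsLocalRing.residue R (x : R))

theorem stmt_5 (k R : Type*) [Field k] [CommRing R] [IsDomain R]
    [IsDiscreteValuationRing R] [Algebra k R]
    -- R is complete for the m-adic topology
    [IsAdicComplete (IsLocalRing.maximalIdeal R) R]
    (u : R)
    -- the residue ū of u is transcendental over k
    (htrans : Transcendental k (IsLocalRing.residue R u))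
    -- the residue field K is a finite separable extension of k(ū)
    (hfin : FiniteDimensional
      (IntermediateField.adjoin k {IsLocalRing.residue R u})
      (IsLocalRing.ResidueField R))
    (hsep : Algebra.IsSeparable
      (IntermediateField.adjoin k {IsLocalRing.residue R u})
      (IsLocalRing.ResidueField R)) :
    (∃! L : Subring R, IsCoeffField k R u L) ∧
    (∀ L : Subring R, IsCoeffField k R u L → ∃ y ∈ L,
      ∀ L' : Subring R, IsField L' → (∀ c : k, algebraMap k R c ∈ L') →
        u ∈ L' → y ∈ L' → L ≤ L') := by
  classical
  let ub : IsLocalRing.ResidueField R := IsLocalRing.residue R u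
  let B : IntermediateField k (IsLocalRing.ResidueField R) := IntermediateField.adjoin k {ub}
  haveI : IsScalarTower k R (IsLocalRing.ResidueField R) :=
    IsScalarTower.of_algebraMap_eq fun c => rfl
  -- residue of polynomial values in `u`
  have hresaeval : ∀ p : k[X], IsLocalRing.residue R (aeval u p) = aeval ub p := by
    intro p
    have := Polynomial.aeval_algHom_apply
      (IsScalarTower.toAlgHom k R (IsLocalRing.ResidueField R)) u p
    simpa [IsLocalRing.ResidueField.algebraMap_eq] using this.symm
  have haevalne : ∀ p : k[X], p ≠ 0 → aeval ub p ≠ 0 := fun p hp h =>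
    hp (transcendental_iff.mp htrans p h)
  have hgu : ∀ p : k[X], p ≠ 0 → IsUnit (aeval u p) := by
    intro p hp
    rw [← IsLocalRing.notMem_maximalIdeal]
    intro hm
    exact haevalne p hp (by rw [← hresaeval]; exact (IsLocalRing.residue_eq_zero_iff _).mpr hm)
  have jmem : ∀ p : k[X], aeval ub p ∈ B := fun p =>
    (IntermediateField.mem_adjoin_simple_iff k _).mpr ⟨p, 1, by simp⟩
  let j0 : k[X] →+* ↥B :=
    RingHom.codRestrict ((aeval ub : k[X] →ₐ[k] _).toRingHom) B jmem
  letI : Algebra k[X] ↥B := j0.toAlgebra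
  have halg : ∀ p : k[X],
      ((algebraMap k[X] ↥B p : ↥B) : IsLocalRing.ResidueField R) = aeval ub p := fun _ => rfl
  have hvalalg : ∀ b : ↥B,
      algebraMap ↥B (IsLocalRing.ResidueField R) b = (b : IsLocalRing.ResidueField R) :=
    fun _ => rfl
  haveI hloc : IsLocalization (nonZeroDivisors k[X]) ↥B := by
    constructor
    constructor
    · intro s
      have hs : (s : k[X]) ≠ 0 := nonZeroDivisors.ne_zero s.2
      rw [isUnit_iff_ne_zero]
      intro h
      apply haevalne s hs
      rw [← halg s, h]
      simp
    · intro z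
      obtain ⟨r, s, hz⟩ :=
        (IntermediateField.mem_adjoin_simple_iff k ((z : IsLocalRing.ResidueField R))).mp z.2
      by_cases hs : aeval ub s = 0
      · have hz0 : (z : IsLocalRing.ResidueField R) = 0 := by rw [hz, hs, div_zero]
        refine ⟨⟨0, 1⟩, Subtype.ext ?_⟩
        show (z : IsLocalRing.ResidueField R) * _ = _
        simp [hz0]
      · have hs0 : s ≠ 0 := fun h => hs (by simp [h])
        refine ⟨⟨r, ⟨s, mem_nonZeroDivisors_of_ne_zero hs0⟩⟩, Subtype.ext ?_⟩
        show (z : IsLocalRing.ResidueField R) * aeval ub s = aeval ub r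
        rw [hz, div_mul_cancel₀ _ hs]
    · intro x y h
      refine ⟨1, ?_⟩
      have h1 : aeval ub x = aeval ub y := by
        rw [← halg x, ← halg y, h]
      have h2 : x - y = 0 :=
        transcendental_iff.mp htrans _ (by rw [map_sub, h1, sub_self])
      simpa [sub_eq_zero] using h2
  let g : k[X] →+* R := (aeval u : k[X] →ₐ[k] R).toRingHom
  have hg : ∀ s : nonZeroDivisors k[X], IsUnit (g s) := fun s =>
    hgu s (nonZeroDivisors.ne_zero s.2)
  let ψ : ↥B →+* R := IsLocalization.lift (M := nonZeroDivisors k[X]) hg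
  have hψj : ∀ p : k[X], ψ (algebraMap k[X] ↥B p) = aeval u p := fun p =>
    IsLocalization.lift_eq hg p
  have hres : ∀ b : ↥B, IsLocalRing.residue R (ψ b) = (b : IsLocalRing.ResidueField R) := by
    have hcomp : (IsLocalRing.residue R).comp ψ
        = (B.val : ↥B →ₐ[k] IsLocalRing.ResidueField R).toRingHom := by
      apply IsLocalization.ringHom_ext (nonZeroDivisors k[X])
      refine RingHom.ext fun p => ?_
      show IsLocalRing.residue R (ψ (algebraMap k[X] ↥B p)) = _
      rw [hψj, hresaeval]
      exact (halg p).symm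
    intro b
    exact RingHom.congr_fun hcomp b
  letI : Algebra ↥B R := ψ.toAlgebra
  haveI hfin' : FiniteDimensional ↥B (IsLocalRing.ResidueField R) := hfin
  haveI hsep' : Algebra.IsSeparable ↥B (IsLocalRing.ResidueField R) := hsep
  let pb : PowerBasis ↥B (IsLocalRing.ResidueField R) :=
    Field.powerBasisOfFiniteOfSeparable ↥B _
  have hint : IsIntegral ↥B pb.gen := IsIntegral.of_finite ↥B pb.gen
  set f : Polynomial ↥B := minpoly ↥B pb.gen with hfdef
  have hmon : f.Monic := minpoly.monic hint
  have hsepf : f.Separable := Algebra.IsSeparable.isSeparable ↥B pb.gen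
  have hroot : aeval pb.gen f = 0 := minpoly.aeval _ _
  have hder : aeval pb.gen (derivative f) ≠ 0 := hsepf.aeval_derivative_ne_zero hroot
  have hcompalg : (IsLocalRing.residue R).comp ψ
      = algebraMap ↥B (IsLocalRing.ResidueField R) := by
    refine RingHom.ext fun b => ?_
    rw [RingHom.comp_apply, hres b, hvalalg]
  have hkey : ∀ (q : Polynomial ↥B) (t : R),
      IsLocalRing.residue R ((q.map ψ).eval t) = aeval (IsLocalRing.residue R t) q := by
    intro q t
    rw [Polynomial.eval_map, Polynomial.hom_eval₂, hcompalg, aeval_def]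
  -- Hensel lifting
  obtain ⟨a₀, ha₀⟩ := IsLocalRing.residue_surjective (R := R) pb.gen
  have h1 : (f.map ψ).eval a₀ ∈ IsLocalRing.maximalIdeal R := by
    rw [← IsLocalRing.residue_eq_zero_iff, hkey, ha₀]
    exact hroot
  have h2 : IsUnit (Ideal.Quotient.mk (IsLocalRing.maximalIdeal R)
      ((derivative (f.map ψ)).eval a₀)) := by
    have hd : IsLocalRing.residue R ((derivative (f.map ψ)).eval a₀)
        = aeval pb.gen (derivative f) := by
      rw [Polynomial.derivative_map, hkey, ha₀]
    show IsUnit (IsLocalRing.residue R ((derivative (f.map ψ)).eval a₀))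
    rw [hd]
    exact isUnit_iff_ne_zero.mpr hder
  obtain ⟨y, hyroot, hy0⟩ :=
    HenselianRing.is_henselian (I := IsLocalRing.maximalIdeal R) (f.map ψ)
      (hmon.map ψ) a₀ h1 h2
  have hyres : IsLocalRing.residue R y = pb.gen := by
    have h3 : IsLocalRing.residue R (y - a₀) = 0 := (IsLocalRing.residue_eq_zero_iff _).mpr hy0
    rw [map_sub, sub_eq_zero] at h3
    rw [h3, ha₀]
  have hyaeval : aeval y f = 0 := by
    rw [aeval_def]
    show eval₂ ψ y f = 0
    rw [← Polynomial.eval_map]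
    exact hyroot
  let φ : IsLocalRing.ResidueField R →ₐ[↥B] R := pb.lift y hyaeval
  have hφgen : φ pb.gen = y := pb.lift_gen y hyaeval
  let resAlg : R →ₐ[↥B] IsLocalRing.ResidueField R :=
    { IsLocalRing.residue R with
      commutes' := fun b => (hres b).trans (hvalalg b).symm }
  have hφres : ∀ a : IsLocalRing.ResidueField R, IsLocalRing.residue R (φ a) = a := by
    have hcomp : resAlg.comp φ = AlgHom.id ↥B (IsLocalRing.ResidueField R) := by
      apply pb.algHom_ext
      show resAlg (φ pb.gen) = pb.gen
      rw [hφgen]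
      exact hyres
    intro a
    exact AlgHom.congr_fun hcomp a
  set L : Subring R := φ.toRingHom.range with hLdef
  have hyL : y ∈ L := ⟨pb.gen, hφgen⟩
  -- membership of polynomial evaluations
  have memPoly : ∀ (L' : Subring R), (∀ c : k, algebraMap k R c ∈ L') → u ∈ L' →
      ∀ p : k[X], aeval u p ∈ L' := by
    intro L' hc hu p
    induction p using Polynomial.induction_on' with
    | add p q hp hq => rw [map_add]; exact Subring.add_mem _ hp hq
    | monomial n a =>
      rw [Polynomial.aeval_monomial]
      exact Subring.mul_mem _ (hc a) (Subring.pow_mem _ hu n)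
  have memB : ∀ (L' : Subring R), IsField L' → (∀ c : k, algebraMap k R c ∈ L') → u ∈ L' →
      ∀ b : ↥B, ψ b ∈ L' := by
    intro L' hLf hc hu b
    obtain ⟨⟨p, s⟩, hps⟩ := IsLocalization.surj (nonZeroDivisors k[X]) b
    have hps' : ψ b * aeval u (s : k[X]) = aeval u p := by
      have h4 := congrArg ψ hps
      rwa [map_mul, hψj, hψj] at h4
    have hsne : (s : k[X]) ≠ 0 := nonZeroDivisors.ne_zero s.2
    have hw : aeval u (s : k[X]) ∈ L' := memPoly L' hc hu _
    have hwne : (⟨aeval u (s : k[X]), hw⟩ : L') ≠ 0 := by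
      intro h
      exact (hgu _ hsne).ne_zero (congrArg Subtype.val h)
    obtain ⟨z, hz⟩ := hLf.mul_inv_cancel hwne
    have hz' : aeval u (s : k[X]) * (z : R) = 1 := congrArg Subtype.val hz
    have h5 : ψ b = aeval u p * (z : R) := by
      calc ψ b = ψ b * (aeval u (s : k[X]) * (z : R)) := by rw [hz', mul_one]
      _ = ψ b * aeval u (s : k[X]) * (z : R) := by ring
      _ = aeval u p * (z : R) := by rw [hps']
    rw [h5]
    exact Subring.mul_mem _ (memPoly L' hc hu p) z.2
  -- L is contained in any subring containing ψ(B) and y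
  have hLle : ∀ (L' : Subring R), (∀ b : ↥B, ψ b ∈ L') → y ∈ L' → L ≤ L' := by
    intro L' hb hy x hx
    obtain ⟨a, rfl⟩ := hx
    have hmem : a ∈ Algebra.adjoin ↥B {pb.gen} := by rw [pb.adjoin_gen_eq_top]; trivial
    refine Algebra.adjoin_induction ?_ ?_ ?_ ?_ hmem
    · intro x hx
      rw [Set.eq_of_mem_singleton hx]
      show φ pb.gen ∈ L'
      rw [hφgen]; exact hy
    · intro r
      show φ (algebraMap ↥B _ r) ∈ L'
      rw [φ.commutes]
      exact hb r
    · intro x y _ _ hx hy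
      rw [map_add]; exact Subring.add_mem _ hx hy
    · intro x y _ _ hx hy
      rw [map_mul]; exact Subring.mul_mem _ hx hy
  have evalmem : ∀ (L' : Subring R) (t : R), t ∈ L' → (∀ b : ↥B, ψ b ∈ L') →
      (f.map ψ).eval t ∈ L' := by
    intro L' t ht hb
    rw [Polynomial.eval_eq_sum_range]
    refine Subring.sum_mem _ fun i _ => ?_
    rw [Polynomial.coeff_map]
    exact Subring.mul_mem _ (hb _) (Subring.pow_mem _ ht i)
  -- y belongs to any coefficient field
  have hymem : ∀ (M : Subring R), IsCoeffField k R u M → y ∈ M := by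
    intro M hM
    obtain ⟨hMf, hMc, hMu, hMbij⟩ := hM
    have hbM := memB M hMf hMc hMu
    obtain ⟨y', hy'⟩ := hMbij.2 pb.gen
    have hy'res : IsLocalRing.residue R (y' : R) = pb.gen := hy'
    have hevmem : (f.map ψ).eval (y' : R) ∈ M := evalmem M _ y'.2 hbM
    have hev0 : (f.map ψ).eval (y' : R) = 0 := by
      have h0 : IsLocalRing.residue R ((f.map ψ).eval (y' : R)) = 0 := by
        rw [hkey, hy'res]; exact hroot
      have h6 : (⟨_, hevmem⟩ : M) = 0 := hMbij.1 (by simpa using h0)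
      exact congrArg Subtype.val h6
    obtain ⟨z, hz⟩ := (f.map ψ).binomExpansion y ((y' : R) - y)
    have hδ : (y' : R) - y ∈ IsLocalRing.maximalIdeal R := by
      rw [← IsLocalRing.residue_eq_zero_iff, map_sub, hy'res, hyres, sub_self]
    have hdu : IsUnit ((derivative (f.map ψ)).eval y) := by
      rw [← IsLocalRing.notMem_maximalIdeal]
      intro hmem'
      have h0 : IsLocalRing.residue R ((derivative (f.map ψ)).eval y) = 0 :=
        (IsLocalRing.residue_eq_zero_iff _).mpr hmem'
      rw [Polynomial.derivative_map, hkey, hyres] at h0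
      exact hder h0
    have hyy : y + ((y' : R) - y) = (y' : R) := by ring
    rw [hyy, hev0, hyroot] at hz
    have hz2 : ((y' : R) - y) * ((derivative (f.map ψ)).eval y + z * ((y' : R) - y)) = 0 := by
      linear_combination -hz
    have hne : (derivative (f.map ψ)).eval y + z * ((y' : R) - y) ≠ 0 := by
      intro h
      apply IsLocalRing.notMem_maximalIdeal.mpr hdu
      have h7 : (derivative (f.map ψ)).eval y = -(z * ((y' : R) - y)) :=
        eq_neg_of_add_eq_zero_left h
      rw [h7]
      exact neg_mem (Ideal.mul_mem_left _ _ hδ)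
    rcases mul_eq_zero.mp hz2 with h | h
    · have h8 : (y' : R) = y := by rwa [sub_eq_zero] at h
      rw [← h8]; exact y'.2
    · exact absurd h hne
  -- L is a coefficient field
  have hLcoeff : IsCoeffField k R u L := by
    refine ⟨?_, ?_, ?_, ?_⟩
    · refine ⟨⟨0, 1, fun h => zero_ne_one (α := R) (congrArg Subtype.val h)⟩,
        mul_comm, ?_⟩
      intro x hx0
      obtain ⟨a, ha⟩ := x.2
      have ha0 : a ≠ 0 := by
        intro h
        apply hx0
        apply Subtype.ext
        rw [← ha, h, map_zero]
        rfl
      refine ⟨⟨φ a⁻¹, ⟨a⁻¹, rfl⟩⟩, Subtype.ext ?_⟩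
      show (x : R) * φ a⁻¹ = 1
      rw [← ha]
      show φ a * φ a⁻¹ = 1
      rw [← map_mul, mul_inv_cancel₀ ha0, map_one]
    · intro c
      refine ⟨algebraMap k (IsLocalRing.ResidueField R) c, ?_⟩
      have hh1 : algebraMap k (IsLocalRing.ResidueField R) c
          = algebraMap ↥B _ (algebraMap k ↥B c) :=
        IsScalarTower.algebraMap_apply k ↥B _ c
      have hh2 : algebraMap k ↥B c = algebraMap k[X] ↥B (C c) := by
        apply Subtype.ext
        rw [halg, aeval_C,
          IsScalarTower.algebraMap_apply k ↥B (IsLocalRing.ResidueField R) c, hvalalg]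
      show φ _ = _
      rw [hh1, φ.commutes, hh2]
      show ψ _ = _
      rw [hψj, aeval_C]
    · refine ⟨ub, ?_⟩
      have hh3 : ub = algebraMap ↥B _ (algebraMap k[X] ↥B X) := by
        rw [hvalalg, halg, aeval_X]
      show φ _ = _
      rw [hh3, φ.commutes]
      show ψ _ = _
      rw [hψj, aeval_X]
    · constructor
      · rintro ⟨x, hx⟩ ⟨x', hx'⟩ h
        obtain ⟨a, rfl⟩ := hx
        obtain ⟨a', rfl⟩ := hx'
        simp only at h
        apply Subtype.ext
        show φ a = φ a'
        have : a = a' := by rw [← hφres a, ← hφres a']; exact h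
        rw [this]
      · intro b
        exact ⟨⟨φ b, ⟨b, rfl⟩⟩, hφres b⟩
  -- uniqueness
  have huniq : ∀ M : Subring R, IsCoeffField k R u M → M = L := by
    intro M hM
    have hyM := hymem M hM
    have hle : L ≤ M := hLle M (memB M hM.1 hM.2.1 hM.2.2.1) hyM
    refine le_antisymm ?_ hle
    intro x hx
    have hmem : φ (IsLocalRing.residue R x) ∈ M := hle ⟨_, rfl⟩
    have heq : (⟨x, hx⟩ : M) = ⟨φ (IsLocalRing.residue R x), hmem⟩ := by
      apply hM.2.2.2.1
      show IsLocalRing.residue R x = IsLocalRing.residue R (φ (IsLocalRing.residue R x))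
      rw [hφres]
    exact ⟨IsLocalRing.residue R x, (congrArg Subtype.val heq).symm⟩
  constructor
  · exact ⟨L, hLcoeff, huniq⟩
  · intro M hM
    rw [huniq M hM]
    refine ⟨y, hyL, ?_⟩
    intro L' hf' hc' hu' hy'
    exact hLle L' (memB L' hf' hc' hu') hy'
end

section
/- Let R be a complete discrete valuation ring containing a field k, with maximal ideal m and residue field K = R/m, let u ∈ R have residue ū transcendental over k with K a finite separable extension of k(ū), and let L ⊆ R be the unique subfield containing k and u that maps isomorphically onto K under the quotient map. Let v be a uniformizing parameter of R (a generator of m). Then every element f ∈ R has a unique expansion f = Σ_{j≥0} a_j v^j with all a_j ∈ L, convergent for the m-adic topology; equivalently, the natural map from the power series ring L[[T]] to R sending Σ a_j T^j to the (m-adically convergent) sum Σ a_j v^j is a ring isomorphism. -/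
/-!
STATEMENT 6: Expansion in the coefficient field.  With `R` a complete discrete
valuation ring containing `k`, `u ∈ R` with transcendental residue `ū` and residue
field finite separable over `k(ū)`, `L ⊆ R` the coefficient subfield (containing `k`
and `u`, mapped isomorphically onto the residue field), and `v` a uniformizer, every
`f ∈ R` has a unique expansion `f = ∑_{j≥0} a_j v^j` with `a_j ∈ L`, convergent for
the `m`-adic topology (i.e. `f − ∑_{j<n} a_j v^j ∈ m^n` for all `n`).
-/

theorem stmt_6 (k R : Type*) [Field k] [CommRing R] [IsDomain R]
    [IsDiscreteValuationRing R] [Algebra k R]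
    -- R is complete for the m-adic topology
    [IsAdicComplete (IsLocalRing.maximalIdeal R) R]
    (u : R)
    -- the residue ū of u is transcendental over k
    (htrans : Transcendental k (IsLocalRing.residue R u))
    -- the residue field K is a finite separable extension of k(ū)
    (hfin : FiniteDimensional
      (IntermediateField.adjoin k {IsLocalRing.residue R u})
      (IsLocalRing.ResidueField R))
    (hsep : Algebra.IsSeparable
      (IntermediateField.adjoin k {IsLocalRing.residue R u})
      (IsLocalRing.ResidueField R))
    -- L is the coefficient subfield: a subfield of R containing k and u, mapped
    -- isomorphically onto the residue field by the quotient map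
    (L : Subring R)
    (hLfield : IsField L)
    (hLk : ∀ c : k, algebraMap k R c ∈ L)
    (hLu : u ∈ L)
    (hLres : Function.Bijective (fun x : L => IsLocalRing.residue R (x : R)))
    -- v is a uniformizing parameter of R
    (v : R)
    (hv : IsLocalRing.maximalIdeal R = Ideal.span {v}) :
    ∀ f : R, ∃! a : ℕ → L,
      ∀ n : ℕ, f - ∑ j ∈ Finset.range n, (a j : R) * v ^ j ∈
        (IsLocalRing.maximalIdeal R) ^ n := by

  intro f
  have hv0 : v ≠ 0 := by
    intro h
    apply IsDiscreteValuationRing.not_a_field R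
    rw [hv, h, Ideal.span_singleton_eq_bot]
  have key : ∀ r : R, ∃ p : L × R, r = (p.1 : R) + v * p.2 := by
    intro r
    obtain ⟨x, hx⟩ := hLres.2 (IsLocalRing.residue R r)
    have hmem : r - (x : R) ∈ IsLocalRing.maximalIdeal R := by
      have h0 : IsLocalRing.residue R (r - (x : R)) = 0 := by
        simp only [map_sub]
        rw [show IsLocalRing.residue R (x : R) = IsLocalRing.residue R r from hx]
        ring
      exact Ideal.Quotient.eq_zero_iff_mem.mp h0
    rw [hv, Ideal.mem_span_singleton] at hmem
    obtain ⟨q, hq⟩ := hmem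
    exact ⟨(x, q), by linear_combination hq⟩
  choose step hstep using key
  set g : ℕ → R := fun n => Nat.rec f (fun _ r => (step r).2) n with hgdef
  set a : ℕ → L := fun n => (step (g n)).1 with hadef
  have hg : ∀ n, g n = (a n : R) + v * g (n + 1) := fun n => hstep (g n)
  have hsum : ∀ n, f - ∑ j ∈ Finset.range n, (a j : R) * v ^ j = v ^ n * g n := by
    intro n
    induction n with
    | zero =>
      simp only [Finset.range_zero, Finset.sum_empty, sub_zero, pow_zero, one_mul]
      rfl
    | succ n ih =>
      rw [Finset.sum_range_succ]
      have h1 := hg n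
      linear_combination ih + v ^ n * h1
  have hLinj : ∀ x : L, (x : R) ∈ IsLocalRing.maximalIdeal R → x = 0 := by
    intro x hx
    apply hLres.1
    show IsLocalRing.residue R (x : R) = IsLocalRing.residue R ((0 : L) : R)
    have h1 : IsLocalRing.residue R (x : R) = 0 := Ideal.Quotient.eq_zero_iff_mem.mpr hx
    simp [h1]
  have hasat : ∀ n : ℕ, f - ∑ j ∈ Finset.range n, (a j : R) * v ^ j ∈
      (IsLocalRing.maximalIdeal R) ^ n := by
    intro n
    rw [hsum n, hv, Ideal.span_singleton_pow, Ideal.mem_span_singleton]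
    exact ⟨g n, rfl⟩
  refine ⟨a, hasat, ?_⟩
  intro b hb
  funext n
  induction n using Nat.strong_induction_on with
  | _ n ih =>
    have h1 := hb (n + 1)
    have h2 := hasat (n + 1)
    have h3 : ((b n : R) - (a n : R)) * v ^ n ∈ (IsLocalRing.maximalIdeal R) ^ (n + 1) := by
      have h4 := Ideal.sub_mem _ h2 h1
      have h5 : (f - ∑ j ∈ Finset.range (n + 1), (a j : R) * v ^ j) -
          (f - ∑ j ∈ Finset.range (n + 1), (b j : R) * v ^ j) =
          ((b n : R) - (a n : R)) * v ^ n := by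
        have hs : ∑ j ∈ Finset.range n, ((b j : R) * v ^ j) =
            ∑ j ∈ Finset.range n, ((a j : R) * v ^ j) :=
          Finset.sum_congr rfl (fun j hj => by rw [ih j (Finset.mem_range.mp hj)])
        rw [Finset.sum_range_succ, Finset.sum_range_succ, hs]
        ring
      rwa [h5] at h4
    rw [hv, Ideal.span_singleton_pow, Ideal.mem_span_singleton] at h3
    obtain ⟨c, hc⟩ := h3
    have h6 : (b n : R) - (a n : R) = v * c := by
      have := hc
      rw [pow_succ] at this
      have h7 : ((b n : R) - (a n : R)) * v ^ n = (v * c) * v ^ n := by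
        linear_combination this
      exact mul_right_cancel₀ (pow_ne_zero n hv0) h7
    have h8 : ((b n - a n : L) : R) ∈ IsLocalRing.maximalIdeal R := by
      push_cast
      rw [h6, hv, Ideal.mem_span_singleton]
      exact ⟨c, rfl⟩
    exact sub_eq_zero.mp (hLinj _ h8)
end

section
/- Let k be a field. There exists an injective k-algebra homomorphism from the fraction field of the formal power series ring k[[u,v]] in two variables into the iterated Laurent series field k((u))((v)), which sends u to u and v to v, and which maps the subring k[[u,v]] into the subring k((u))[[v]]. -/
/-!
STATEMENT 8: There is an injective `k`-algebra homomorphism from the fraction field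
of `k[[u,v]]` into `k((u))((v))`, sending `u` to `u` and `v` to `v`, and mapping
`k[[u,v]]` into the subring `k((u))[[v]]` (series with no negative powers of `v`).
`k[[u,v]]` is `MvPowerSeries (Fin 2) k` (with `u = X 0`, `v = X 1`), and
`k((u))((v))` is `LaurentSeries (LaurentSeries k)`; in it `u` is
`HahnSeries.single 0 (HahnSeries.single 1 1)` and `v` is `HahnSeries.single 1 1`.
-/


open Finsupp in
lemma aux_decomp (d : Fin 2 →₀ ℕ) :
    Finsupp.single (0 : Fin 2) (d 0) + Finsupp.single 1 (d 1) = d := by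
  ext x
  fin_cases x <;> simp [Finsupp.single_apply]

lemma aux_apply0 (i j : ℕ) :
    (Finsupp.single (0 : Fin 2) i + Finsupp.single 1 j : Fin 2 →₀ ℕ) 0 = i := by
  simp [Finsupp.single_apply]

lemma aux_apply1 (i j : ℕ) :
    (Finsupp.single (0 : Fin 2) i + Finsupp.single 1 j : Fin 2 →₀ ℕ) 1 = j := by
  simp [Finsupp.single_apply]

lemma aux_zero_iff {i j : ℕ} :
    (Finsupp.single (0 : Fin 2) i + Finsupp.single 1 j : Fin 2 →₀ ℕ) = 0 ↔ i = 0 ∧ j = 0 := by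
  constructor
  · intro h
    exact ⟨by simpa [aux_apply0] using congrFun (congrArg (DFunLike.coe) h) 0,
      by simpa [aux_apply1] using congrFun (congrArg (DFunLike.coe) h) 1⟩
  · rintro ⟨rfl, rfl⟩; simp

lemma aux_inj {i j i' j' : ℕ}
    (h : Finsupp.single (0 : Fin 2) i + Finsupp.single 1 j
       = Finsupp.single (0 : Fin 2) i' + Finsupp.single 1 j') : i = i' ∧ j = j' := by
  constructor
  · have := congrFun (congrArg (DFunLike.coe) h) 0
    simpa [aux_apply0] using this
  · have := congrFun (congrArg (DFunLike.coe) h) 1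
    simpa [aux_apply1] using this

noncomputable def auxFun (k : Type*) [Field k] :
    MvPowerSeries (Fin 2) k → PowerSeries (PowerSeries k) := fun P =>
  PowerSeries.mk fun j => PowerSeries.mk fun i =>
    MvPowerSeries.coeff (Finsupp.single 0 i + Finsupp.single 1 j) P

lemma auxFun_coeff (k : Type*) [Field k] (P : MvPowerSeries (Fin 2) k) (i j : ℕ) :
    PowerSeries.coeff i (PowerSeries.coeff j (auxFun k P)) =
      MvPowerSeries.coeff (Finsupp.single 0 i + Finsupp.single 1 j) P := by
  simp [auxFun]

noncomputable def auxHom (k : Type*) [Field k] :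
    MvPowerSeries (Fin 2) k →+* PowerSeries (PowerSeries k) where
  toFun := auxFun k
  map_zero' := by ext j i; simp [auxFun]
  map_add' P Q := by ext j i; simp [auxFun]
  map_one' := by
    ext j i
    rw [auxFun_coeff, MvPowerSeries.coeff_one, if_congr aux_zero_iff rfl rfl]
    by_cases hj : j = 0 <;> by_cases hi : i = 0 <;>
      simp [hi, hj, PowerSeries.coeff_one]
  map_mul' P Q := by
    ext j i
    rw [auxFun_coeff, MvPowerSeries.coeff_mul, PowerSeries.coeff_mul, map_sum]
    have : ∀ p ∈ Finset.HasAntidiagonal.antidiagonal j,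
        PowerSeries.coeff i
          (PowerSeries.coeff p.1 (auxFun k P) *
           PowerSeries.coeff p.2 (auxFun k Q)) =
        ∑ q ∈ Finset.HasAntidiagonal.antidiagonal i,
          MvPowerSeries.coeff (Finsupp.single 0 q.1 + Finsupp.single 1 p.1) P *
          MvPowerSeries.coeff (Finsupp.single 0 q.2 + Finsupp.single 1 p.2) Q := by
      intro p _
      rw [PowerSeries.coeff_mul]
      exact Finset.sum_congr rfl fun q _ => by rw [auxFun_coeff, auxFun_coeff]
    rw [Finset.sum_congr rfl this, ← Finset.sum_product']
    refine (Finset.sum_nbij' (i := ?_) (j := ?_) ?_ ?_ ?_ ?_ ?_).symm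
    · exact fun pq => (Finsupp.single 0 pq.2.1 + Finsupp.single 1 pq.1.1,
        Finsupp.single 0 pq.2.2 + Finsupp.single 1 pq.1.2)
    · exact fun d => ((d.1 1, d.2 1), (d.1 0, d.2 0))
    · rintro ⟨⟨j1, j2⟩, ⟨i1, i2⟩⟩ h
      simp only [Finset.mem_product, Finset.HasAntidiagonal.mem_antidiagonal] at h
      simp only [Finset.HasAntidiagonal.mem_antidiagonal]
      rw [add_add_add_comm, ← Finsupp.single_add, ← Finsupp.single_add, h.1, h.2]
    · rintro ⟨d1, d2⟩ h
      simp only [Finset.HasAntidiagonal.mem_antidiagonal] at h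
      simp only [Finset.mem_product, Finset.HasAntidiagonal.mem_antidiagonal]
      constructor
      · have := congrFun (congrArg (DFunLike.coe) h) 1
        simpa [aux_apply1] using this
      · have := congrFun (congrArg (DFunLike.coe) h) 0
        simpa [aux_apply0] using this
    · rintro ⟨⟨j1, j2⟩, ⟨i1, i2⟩⟩ h
      simp [aux_apply0, aux_apply1]
    · rintro ⟨d1, d2⟩ h
      simp [aux_decomp]
    · rintro ⟨⟨j1, j2⟩, ⟨i1, i2⟩⟩ h
      rfl

lemma auxHom_inj (k : Type*) [Field k] : Function.Injective (auxHom k) := by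
  intro P Q h
  ext d
  have := congrArg (fun (F : PowerSeries (PowerSeries k)) => PowerSeries.coeff (d 0)
    (PowerSeries.coeff (d 1) F)) h
  simpa [auxHom, auxFun_coeff, aux_decomp] using this

noncomputable def auxG (k : Type*) [Field k] :
    PowerSeries (PowerSeries k) →+* LaurentSeries (LaurentSeries k) :=
  (HahnSeries.ofPowerSeries ℤ (LaurentSeries k)).comp
    (PowerSeries.map (HahnSeries.ofPowerSeries ℤ k))

lemma auxG_inj (k : Type*) [Field k] : Function.Injective (auxG k) := by
  rw [auxG, RingHom.coe_comp]
  exact Function.Injective.comp HahnSeries.ofPowerSeries_injective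
    (fun x y h => PowerSeries.ext fun n => HahnSeries.ofPowerSeries_injective (by
      simpa using congrArg (PowerSeries.coeff n) h))

lemma auxHom_coeff (k : Type*) [Field k] (P : MvPowerSeries (Fin 2) k) (i j : ℕ) :
    PowerSeries.coeff i (PowerSeries.coeff j (auxHom k P)) =
      MvPowerSeries.coeff (Finsupp.single 0 i + Finsupp.single 1 j) P :=
  auxFun_coeff k P i j

noncomputable def auxF (k : Type*) [Field k] :
    MvPowerSeries (Fin 2) k →+* LaurentSeries (LaurentSeries k) :=
  (auxG k).comp (auxHom k)

lemma auxF_inj (k : Type*) [Field k] : Function.Injective (auxF k) := by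
  rw [auxF, RingHom.coe_comp]
  exact Function.Injective.comp (auxG_inj k) (auxHom_inj k)

lemma auxF_eq (k : Type*) [Field k] (P : MvPowerSeries (Fin 2) k) :
    auxF k P = (HahnSeries.ofPowerSeries ℤ (LaurentSeries k))
      ((PowerSeries.map (HahnSeries.ofPowerSeries ℤ k)) (auxHom k P)) := rfl

lemma auxF_neg (k : Type*) [Field k] (P : MvPowerSeries (Fin 2) k) (j : ℤ) (hj : j < 0) :
    (auxF k P).coeff j = 0 := by
  rw [auxF_eq, HahnSeries.ofPowerSeries_apply]
  apply HahnSeries.embDomain_notin_range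
  rintro ⟨n, hn⟩
  have : (n : ℤ) = j := hn
  omega

lemma auxF_C (k : Type*) [Field k] (c : k) :
    auxF k (MvPowerSeries.C (σ := Fin 2) (R := k) c) = algebraMap k (LaurentSeries (LaurentSeries k)) c := by
  have h1 : auxHom k (MvPowerSeries.C (σ := Fin 2) (R := k) c)
      = PowerSeries.C (R := PowerSeries k) (PowerSeries.C (R := k) c) := by
    ext j i
    rw [auxHom_coeff, MvPowerSeries.coeff_C, if_congr aux_zero_iff rfl rfl]
    by_cases hj : j = 0 <;> by_cases hi : i = 0 <;>
      simp [hi, hj, PowerSeries.coeff_C]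
  rw [auxF_eq, h1, PowerSeries.map_C, HahnSeries.ofPowerSeries_C,
    HahnSeries.ofPowerSeries_C]
  rw [HahnSeries.algebraMap_apply', PowerSeries.algebraMap_apply, HahnSeries.ofPowerSeries_C,
    HahnSeries.algebraMap_apply', PowerSeries.algebraMap_apply, HahnSeries.ofPowerSeries_C,
    Algebra.algebraMap_self, RingHom.id_apply]

lemma auxF_X0 (k : Type*) [Field k] :
    auxF k (MvPowerSeries.X 0) = HahnSeries.single 0 (HahnSeries.single 1 1) := by
  have h1 : auxHom k (MvPowerSeries.X (0 : Fin 2))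
      = PowerSeries.C (R := PowerSeries k) PowerSeries.X := by
    ext j i
    rw [auxHom_coeff, MvPowerSeries.coeff_X]
    have : (Finsupp.single (0 : Fin 2) i + Finsupp.single 1 j : Fin 2 →₀ ℕ)
        = Finsupp.single (0 : Fin 2) 1 ↔ i = 1 ∧ j = 0 := by
      constructor
      · intro h
        exact aux_inj (by simpa using h)
      · rintro ⟨rfl, rfl⟩; simp
    rw [if_congr this rfl rfl]
    by_cases hj : j = 0 <;> by_cases hi : i = 1 <;>
      simp [hi, hj, PowerSeries.coeff_C, PowerSeries.coeff_X]
  rw [auxF_eq, h1, PowerSeries.map_C, HahnSeries.ofPowerSeries_X, HahnSeries.ofPowerSeries_C]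
  rfl

lemma auxF_X1 (k : Type*) [Field k] :
    auxF k (MvPowerSeries.X 1) = HahnSeries.single 1 1 := by
  have h1 : auxHom k (MvPowerSeries.X (1 : Fin 2))
      = (PowerSeries.X : PowerSeries (PowerSeries k)) := by
    ext j i
    rw [auxHom_coeff, MvPowerSeries.coeff_X]
    have : (Finsupp.single (0 : Fin 2) i + Finsupp.single 1 j : Fin 2 →₀ ℕ)
        = Finsupp.single (1 : Fin 2) 1 ↔ i = 0 ∧ j = 1 := by
      constructor
      · intro h
        exact aux_inj (by simpa using h)
      · rintro ⟨rfl, rfl⟩; simp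
    rw [if_congr this rfl rfl]
    by_cases hj : j = 1 <;> by_cases hi : i = 0 <;>
      simp [hi, hj, PowerSeries.coeff_X, PowerSeries.coeff_one]
  rw [auxF_eq, h1, PowerSeries.map_X, HahnSeries.ofPowerSeries_X]

theorem stmt_8 (k : Type*) [Field k] :
    ∃ φ : FractionRing (MvPowerSeries (Fin 2) k) →+* LaurentSeries (LaurentSeries k),
      Function.Injective φ ∧
      -- φ is a k-algebra homomorphism
      (∀ c : k,
        φ (algebraMap (MvPowerSeries (Fin 2) k) (FractionRing (MvPowerSeries (Fin 2) k))
            (MvPowerSeries.C (σ := Fin 2) (R := k) c)) =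
          algebraMap k (LaurentSeries (LaurentSeries k)) c) ∧
      -- φ sends u to u and v to v
      φ (algebraMap (MvPowerSeries (Fin 2) k) (FractionRing (MvPowerSeries (Fin 2) k))
          (MvPowerSeries.X 0)) = HahnSeries.single 0 (HahnSeries.single 1 1) ∧
      φ (algebraMap (MvPowerSeries (Fin 2) k) (FractionRing (MvPowerSeries (Fin 2) k))
          (MvPowerSeries.X 1)) = HahnSeries.single 1 1 ∧
      -- φ maps k[[u,v]] into k((u))[[v]]
      (∀ P : MvPowerSeries (Fin 2) k, ∀ j : ℤ, j < 0 →
        (φ (algebraMap (MvPowerSeries (Fin 2) k)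
            (FractionRing (MvPowerSeries (Fin 2) k)) P)).coeff j = 0) := by
  refine ⟨IsFractionRing.lift (auxF_inj k), RingHom.injective _, ?_, ?_, ?_, ?_⟩
  · intro c
    rw [IsFractionRing.lift_algebraMap, auxF_C]
  · rw [IsFractionRing.lift_algebraMap, auxF_X0]
  · rw [IsFractionRing.lift_algebraMap, auxF_X1]
  · intro P j hj
    rw [IsFractionRing.lift_algebraMap]
    exact auxF_neg k P j hj
end

section
/- Let E and F be vector spaces over an arbitrary field k, let A be a subspace of E with A ≠ 0 and A ≠ E, and let B be a subspace of F with B ≠ 0 and B ≠ F. Then the subspace A ⊗_k F + E ⊗_k B of E ⊗_k F is not of the form U ⊗_k V for any subspaces U ⊆ E and V ⊆ F. -/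
open scoped TensorProduct

/-- The subspace `X ⊗ Y` of `E ⊗[k] F`: the span of the pure tensors `x ⊗ y`
with `x ∈ X`, `y ∈ Y`. -/
noncomputable def tensSub {k E F : Type*} [Field k] [AddCommGroup E] [Module k E]
    [AddCommGroup F] [Module k F] (X : Submodule k E) (Y : Submodule k F) :
    Submodule k (E ⊗[k] F) :=
  Submodule.span k {z | ∃ x ∈ X, ∃ y ∈ Y, z = x ⊗ₜ[k] y}

section aux

variable {k E F : Type*} [Field k] [AddCommGroup E] [Module k E]
    [AddCommGroup F] [Module k F]

/-- The functional `x ⊗ y ↦ g x * h y`. -/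
noncomputable def tensFun (g : Module.Dual k E) (h : Module.Dual k F) :
    E ⊗[k] F →ₗ[k] k :=
  (TensorProduct.lid k k).toLinearMap ∘ₗ TensorProduct.map g h

@[simp] lemma tensFun_tmul (g : Module.Dual k E) (h : Module.Dual k F) (x : E) (y : F) :
    tensFun g h (x ⊗ₜ[k] y) = g x * h y := by
  simp [tensFun, smul_eq_mul]

lemma tensFun_vanish_left {g : Module.Dual k E} (h : Module.Dual k F)
    {X : Submodule k E} (Y : Submodule k F) (hg : ∀ x ∈ X, g x = 0)
    {z : E ⊗[k] F} (hz : z ∈ tensSub X Y) : tensFun g h z = 0 := by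
  induction hz using Submodule.span_induction with
  | mem z hz =>
    obtain ⟨x, hx, y, hy, rfl⟩ := hz
    simp [hg x hx]
  | zero => simp
  | add _ _ _ _ h1 h2 => simp [h1, h2]
  | smul c _ _ h1 => simp [h1]

lemma tensFun_vanish_right (g : Module.Dual k E) {h : Module.Dual k F}
    (X : Submodule k E) {Y : Submodule k F} (hh : ∀ y ∈ Y, h y = 0)
    {z : E ⊗[k] F} (hz : z ∈ tensSub X Y) : tensFun g h z = 0 := by
  induction hz using Submodule.span_induction with
  | mem z hz =>
    obtain ⟨x, hx, y, hy, rfl⟩ := hz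
    simp [hh y hy]
  | zero => simp
  | add _ _ _ _ h1 h2 => simp [h1, h2]
  | smul c _ _ h1 => simp [h1]

lemma tensSub_top_top : tensSub (⊤ : Submodule k E) (⊤ : Submodule k F) = ⊤ := by
  rw [tensSub, ← TensorProduct.span_tmul_eq_top k E F]
  congr 1
  ext z
  constructor
  · rintro ⟨x, -, y, -, rfl⟩; exact ⟨x, y, rfl⟩
  · rintro ⟨x, y, rfl⟩; exact ⟨x, trivial, y, trivial, rfl⟩

lemma mem_tensSub (X : Submodule k E) (Y : Submodule k F) {x : E} {y : F}
    (hx : x ∈ X) (hy : y ∈ Y) : x ⊗ₜ[k] y ∈ tensSub X Y :=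
  Submodule.subset_span ⟨x, hx, y, hy, rfl⟩

end aux

/-- if `0 ≠ A ⊊ E` and `0 ≠ B ⊊ F`, then `A ⊗ F + E ⊗ B` is not an
elementary tensor product `U ⊗ V` of subspaces. -/
theorem stmt_11 (k E F : Type*) [Field k] [AddCommGroup E] [Module k E]
    [AddCommGroup F] [Module k F] (A : Submodule k E) (B : Submodule k F)
    (hA0 : A ≠ ⊥) (hAE : A ≠ ⊤) (hB0 : B ≠ ⊥) (hBF : B ≠ ⊤) :
    ∀ (U : Submodule k E) (V : Submodule k F),
      tensSub A (⊤ : Submodule k F) ⊔ tensSub (⊤ : Submodule k E) B ≠ tensSub U V := by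
  intro U V heq
  obtain ⟨a, haA, ha0⟩ := Submodule.exists_mem_ne_zero_of_ne_bot hA0
  obtain ⟨b, hbB, hb0⟩ := Submodule.exists_mem_ne_zero_of_ne_bot hB0
  -- U = ⊤
  have hU : U = ⊤ := by
    by_contra hU
    obtain ⟨e, he⟩ : ∃ e, e ∉ U := by
      by_contra hc; push_neg at hc; exact hU (Submodule.eq_top_iff'.mpr hc)
    obtain ⟨g, hg, hgU⟩ := U.exists_dual_map_eq_bot_of_notMem he inferInstance
    have hgU' : ∀ x ∈ U, g x = 0 := fun x hx => by
      have : g x ∈ U.map g := ⟨x, hx, rfl⟩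
      rwa [hgU, Submodule.mem_bot] at this
    obtain ⟨h, hh⟩ : ∃ h : Module.Dual k F, h b ≠ 0 := by
      by_contra hc
      push_neg at hc
      exact hb0 ((Module.forall_dual_apply_eq_zero_iff k b).mp hc)
    have hmem : e ⊗ₜ[k] b ∈ tensSub U V := by
      rw [← heq]
      exact Submodule.mem_sup_right (mem_tensSub _ _ trivial hbB)
    have := tensFun_vanish_left h V hgU' hmem
    rw [tensFun_tmul] at this
    exact mul_ne_zero hg hh this
  -- V = ⊤
  have hV : V = ⊤ := by
    by_contra hV
    obtain ⟨f, hf⟩ : ∃ f, f ∉ V := by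
      by_contra hc; push_neg at hc; exact hV (Submodule.eq_top_iff'.mpr hc)
    obtain ⟨h, hh, hhV⟩ := V.exists_dual_map_eq_bot_of_notMem hf inferInstance
    have hhV' : ∀ y ∈ V, h y = 0 := fun y hy => by
      have : h y ∈ V.map h := ⟨y, hy, rfl⟩
      rwa [hhV, Submodule.mem_bot] at this
    obtain ⟨g, hg⟩ : ∃ g : Module.Dual k E, g a ≠ 0 := by
      by_contra hc
      push_neg at hc
      exact ha0 ((Module.forall_dual_apply_eq_zero_iff k a).mp hc)
    have hmem : a ⊗ₜ[k] f ∈ tensSub U V := by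
      rw [← heq]
      exact Submodule.mem_sup_left (mem_tensSub _ _ haA trivial)
    have := tensFun_vanish_right g U hhV' hmem
    rw [tensFun_tmul] at this
    exact mul_ne_zero hg hh this
  rw [hU, hV, tensSub_top_top] at heq
  -- derive a contradiction: pick e ∉ A, f ∉ B
  obtain ⟨e, he⟩ : ∃ e, e ∉ A := by
    by_contra hc; push_neg at hc; exact hAE (Submodule.eq_top_iff'.mpr hc)
  obtain ⟨f, hf⟩ : ∃ f, f ∉ B := by
    by_contra hc; push_neg at hc; exact hBF (Submodule.eq_top_iff'.mpr hc)
  obtain ⟨g, hg, hgA⟩ := A.exists_dual_map_eq_bot_of_notMem he inferInstance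
  obtain ⟨h, hh, hhB⟩ := B.exists_dual_map_eq_bot_of_notMem hf inferInstance
  have hgA' : ∀ x ∈ A, g x = 0 := fun x hx => by
    have : g x ∈ A.map g := ⟨x, hx, rfl⟩
    rwa [hgA, Submodule.mem_bot] at this
  have hhB' : ∀ y ∈ B, h y = 0 := fun y hy => by
    have : h y ∈ B.map h := ⟨y, hy, rfl⟩
    rwa [hhB, Submodule.mem_bot] at this
  have hmem : e ⊗ₜ[k] f ∈ tensSub A (⊤ : Submodule k F) ⊔ tensSub (⊤ : Submodule k E) B := by
    rw [heq]; trivial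
  have h0 : tensFun g h (e ⊗ₜ[k] f) = 0 := by
    rcases Submodule.mem_sup.mp hmem with ⟨z1, hz1, z2, hz2, hz⟩
    rw [← hz, map_add, tensFun_vanish_left h _ hgA' hz1,
      tensFun_vanish_right g _ hhB' hz2, add_zero]
  rw [tensFun_tmul] at h0
  exact mul_ne_zero hg hh h0
end
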